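/- Let d ≥ 1, ε ∈ (0, 1/e), and let p be a positive integer with p ≥ 3e · log(1/ε). Let σ > 0, γ ∈ ℝ and y, y₀, f ∈ ℝ^d be such that for each i ∈ {1,…,d} the quantity x_i := ( y_i − γ y_{0,i} − (1−γ) f_i )² / (2σ²) satisfies x_i ≤ log(1/ε). Then | exp( −Σ_{i=1}^d x_i ) − Π_{i=1}^d Σ_{k=0}^{p−1} (−x_i)^k / k! | ≤ d (1 + ε^{3/e})^{d−1} ε^{3/e}. Equivalently, the d-dimensional Gaussian kernel exp( −‖ y − γ y₀ − (1−γ) f ‖²/(2σ²) ) is approximated by the product of the coordinatewise degree-(p−1) Taylor polynomials with error at most d (1 + ε^{3/e})^{d−1} ε^{3/e}. -/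

import Mathlib

open Finset

private lemma real_exp_tsum (x : ℝ) : Real.exp x = ∑' n : ℕ, x ^ n / (n.factorial : ℝ) := by
  rw [Real.exp_eq_exp_ℝ, NormedSpace.exp_eq_tsum_div]

/-- Tail bound for the Taylor polynomial of `exp (-x)`. -/
private lemma exp_neg_taylor_tail (p : ℕ) (x : ℝ) (hx : 0 ≤ x) :
    |Real.exp (-x) - ∑ k ∈ Finset.range p, (-x) ^ k / (k.factorial : ℝ)|
      ≤ x ^ p / (p.factorial : ℝ) * Real.exp x := by
  have hs : Summable (fun n : ℕ => (-x) ^ n / (n.factorial : ℝ)) :=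
    Real.summable_pow_div_factorial _
  have h2 := hs.sum_add_tsum_nat_add p
  have hdiff : Real.exp (-x) - ∑ k ∈ Finset.range p, (-x) ^ k / (k.factorial : ℝ)
      = ∑' i : ℕ, (-x) ^ (i + p) / ((i + p).factorial : ℝ) := by
    rw [real_exp_tsum, ← h2]; ring
  rw [hdiff]
  have hg : Summable (fun i : ℕ => x ^ p / (p.factorial : ℝ) * (x ^ i / (i.factorial : ℝ))) :=
    (Real.summable_pow_div_factorial x).mul_left _
  have hb : ∀ i : ℕ, |(-x) ^ (i + p) / (((i + p).factorial : ℕ) : ℝ)|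
      ≤ x ^ p / (p.factorial : ℝ) * (x ^ i / (i.factorial : ℝ)) := by
    intro i
    have key : ((p.factorial * i.factorial : ℕ) : ℝ) ≤ (((i + p).factorial : ℕ) : ℝ) := by
      exact_mod_cast Nat.le_of_dvd (Nat.factorial_pos _)
        (by simpa [Nat.add_comm] using Nat.factorial_mul_factorial_dvd_factorial_add p i)
    have h0 : (0:ℝ) < ((p.factorial * i.factorial : ℕ) : ℝ) := by positivity
    calc |(-x) ^ (i + p) / (((i + p).factorial : ℕ) : ℝ)|
        = x ^ (i + p) / (((i + p).factorial : ℕ) : ℝ) := by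
          rw [abs_div, abs_pow, abs_neg, abs_of_nonneg hx, Nat.abs_cast]
      _ ≤ x ^ (i + p) / ((p.factorial * i.factorial : ℕ) : ℝ) := by
          apply div_le_div_of_nonneg_left (by positivity) h0 key
      _ = x ^ p / (p.factorial : ℝ) * (x ^ i / (i.factorial : ℝ)) := by
          push_cast; rw [pow_add]; ring
  have htail : Summable (fun i : ℕ => (-x) ^ (i + p) / (((i + p).factorial : ℕ) : ℝ)) :=
    (summable_nat_add_iff p).2 hs
  have habs : Summable (fun i : ℕ => |(-x) ^ (i + p) / (((i + p).factorial : ℕ) : ℝ)|) :=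
    htail.abs
  calc |∑' i : ℕ, (-x) ^ (i + p) / (((i + p).factorial : ℕ) : ℝ)|
      ≤ ∑' i : ℕ, |(-x) ^ (i + p) / (((i + p).factorial : ℕ) : ℝ)| := by
        have hnorm : Summable (fun i : ℕ => ‖(-x) ^ (i + p) / (((i + p).factorial : ℕ) : ℝ)‖) := by
          simpa only [Real.norm_eq_abs] using habs
        simpa only [Real.norm_eq_abs] using norm_tsum_le_tsum_norm hnorm
    _ ≤ ∑' i : ℕ, x ^ p / (p.factorial : ℝ) * (x ^ i / (i.factorial : ℝ)) :=
        Summable.tsum_le_tsum (fun i => hb i) habs hg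
    _ = x ^ p / (p.factorial : ℝ) * Real.exp x := by
        rw [tsum_mul_left, ← real_exp_tsum]

/-- `x^p/p! ≤ exp(3x)/3^p` for `x ≥ 0`. -/
private lemma pow_div_factorial_le (p : ℕ) (x : ℝ) (hx : 0 ≤ x) :
    x ^ p / (p.factorial : ℝ) ≤ Real.exp (3 * x) / 3 ^ p := by
  have hs : Summable (fun n : ℕ => (3 * x) ^ n / (n.factorial : ℝ)) :=
    Real.summable_pow_div_factorial _
  have hterm : (3 * x) ^ p / (p.factorial : ℝ) ≤ Real.exp (3 * x) := by
    rw [real_exp_tsum]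
    exact Summable.le_tsum hs p (fun j _ => by positivity)
  have h3 : (0:ℝ) < 3 ^ p := by positivity
  rw [div_le_div_iff₀ (by positivity) h3]
  have hfac : (0:ℝ) < (p.factorial : ℝ) := by positivity
  have h' := (div_le_iff₀ hfac).1 hterm
  calc x ^ p * 3 ^ p = (3 * x) ^ p := by rw [mul_pow]; ring
    _ ≤ Real.exp (3 * x) * (p.factorial : ℝ) := h'

/-- Telescoping product bound. -/
private lemma prod_sub_prod_bound {ι : Type*} [DecidableEq ι] (s : Finset ι) (a b : ι → ℝ)
    (M δ : ℝ) (hM : 1 ≤ M) (hδ : 0 ≤ δ)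
    (ha : ∀ i, |a i| ≤ 1) (hb : ∀ i, |b i| ≤ M) (hab : ∀ i, |a i - b i| ≤ δ) :
    |∏ i ∈ s, a i - ∏ i ∈ s, b i| ≤ (s.card : ℝ) * M ^ (s.card - 1) * δ := by
  induction s using Finset.induction_on with
  | empty => simp
  | @insert j s hj ih =>
    rw [Finset.prod_insert hj, Finset.prod_insert hj]
    have h1 : a j * ∏ i ∈ s, a i - b j * ∏ i ∈ s, b i
        = a j * (∏ i ∈ s, a i - ∏ i ∈ s, b i) + (a j - b j) * ∏ i ∈ s, b i := by ring
    have hPb : |∏ i ∈ s, b i| ≤ M ^ s.card := by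
      rw [Finset.abs_prod]
      calc ∏ i ∈ s, |b i| ≤ ∏ _i ∈ s, M :=
            Finset.prod_le_prod (fun i _ => abs_nonneg _) (fun i _ => hb i)
        _ = M ^ s.card := Finset.prod_const M
    have t1 : |a j * (∏ i ∈ s, a i - ∏ i ∈ s, b i)|
        ≤ 1 * ((s.card : ℝ) * M ^ (s.card - 1) * δ) := by
      rw [abs_mul]
      exact mul_le_mul (ha j) ih (abs_nonneg _) zero_le_one
    have t2 : |(a j - b j) * ∏ i ∈ s, b i| ≤ δ * M ^ s.card := by
      rw [abs_mul]
      exact mul_le_mul (hab j) hPb (abs_nonneg _) hδ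
    have hsum := (abs_add_le _ _).trans (add_le_add t1 t2)
    rw [h1]
    have hpow : M ^ (s.card - 1) ≤ M ^ s.card := pow_le_pow_right₀ hM (Nat.sub_le _ _)
    have hc : (0:ℝ) ≤ (s.card : ℝ) := Nat.cast_nonneg _
    have h2 : (s.card : ℝ) * M ^ (s.card - 1) * δ ≤ (s.card : ℝ) * M ^ s.card * δ := by
      apply mul_le_mul_of_nonneg_right _ hδ
      exact mul_le_mul_of_nonneg_left hpow hc
    have hcard : (insert j s).card = s.card + 1 := Finset.card_insert_of_notMem hj
    rw [hcard]
    have : ((s.card + 1 : ℕ) : ℝ) = (s.card : ℝ) + 1 := by push_cast; ring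
    rw [this]
    simp only [Nat.add_sub_cancel]
    nlinarith [hsum, h2]

theorem gaussian_kernel_taylor_product_bound
    (d : ℕ) (hd : 1 ≤ d)
    (ε : ℝ) (hε : ε ∈ Set.Ioo (0:ℝ) (1 / Real.exp 1))
    (p : ℕ) (hp : 0 < p)
    (hple : 3 * Real.exp 1 * Real.log (1 / ε) ≤ (p : ℝ))
    (σ γ : ℝ) (hσ : 0 < σ)
    (y y₀ f : Fin d → ℝ)
    (x : Fin d → ℝ)
    (hx : ∀ i, x i = (y i - γ * y₀ i - (1 - γ) * f i) ^ 2 / (2 * σ ^ 2))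
    (hxle : ∀ i, x i ≤ Real.log (1 / ε)) :
    |Real.exp (-∑ i, x i) -
        ∏ i, ∑ k ∈ Finset.range p, (-(x i)) ^ k / (Nat.factorial k : ℝ)|
      ≤ (d : ℝ) * (1 + ε ^ ((3:ℝ) / Real.exp 1)) ^ (d - 1) * ε ^ ((3:ℝ) / Real.exp 1) := by
  have hε0 : 0 < ε := hε.1
  have he : (2.7182818283 : ℝ) < Real.exp 1 := Real.exp_one_gt_d9
  have he' : Real.exp 1 < 2.7182818286 := Real.exp_one_lt_d9
  set L := Real.log (1 / ε) with hL
  have hL1 : 1 < L := by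
    rw [hL, Real.lt_log_iff_exp_lt (by positivity : (0:ℝ) < 1/ε)]
    have h2 : ε * Real.exp 1 < 1 := by
      have := hε.2
      rw [lt_div_iff₀ (Real.exp_pos 1)] at this
      linarith
    rw [lt_div_iff₀ hε0]
    linarith [mul_comm ε (Real.exp 1)]
  have hL0 : 0 < L := by linarith
  set δ : ℝ := ε ^ ((3:ℝ) / Real.exp 1) with hδdef
  have hδ0 : 0 ≤ δ := Real.rpow_nonneg hε0.le _
  have hlog3 : (1:ℝ) ≤ Real.log 3 := by
    rw [Real.le_log_iff_exp_le (by norm_num : (0:ℝ) < 3)]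
    linarith
  -- one-dimensional bound
  have honedim : ∀ i : Fin d,
      |Real.exp (-(x i)) - ∑ k ∈ Finset.range p, (-(x i)) ^ k / (Nat.factorial k : ℝ)| ≤ δ := by
    intro i
    have hxi0 : 0 ≤ x i := by rw [hx i]; positivity
    have hxiL : x i ≤ L := hxle i
    have step1 := exp_neg_taylor_tail p (x i) hxi0
    have step2 : x i ^ p / (p.factorial : ℝ) * Real.exp (x i)
        ≤ Real.exp (3 * x i) / 3 ^ p * Real.exp (x i) := by
      apply mul_le_mul_of_nonneg_right (pow_div_factorial_le p (x i) hxi0) (Real.exp_pos _).le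
    have h3p : (3:ℝ) ^ p = Real.exp ((p : ℝ) * Real.log 3) := by
      rw [Real.exp_nat_mul, Real.exp_log (by norm_num : (0:ℝ) < 3)]
    have step3 : Real.exp (3 * x i) / 3 ^ p * Real.exp (x i)
        = Real.exp (4 * x i - (p : ℝ) * Real.log 3) := by
      rw [h3p, ← Real.exp_sub, ← Real.exp_add]
      ring_nf
    have hplog : 3 * Real.exp 1 * L ≤ (p : ℝ) * Real.log 3 := by
      have h1 : 3 * Real.exp 1 * L ≤ (p : ℝ) := hple
      have h2 : (p : ℝ) ≤ (p : ℝ) * Real.log 3 := by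
        nlinarith [Nat.cast_nonneg (α := ℝ) p]
      linarith
    have step4 : Real.exp (4 * x i - (p : ℝ) * Real.log 3)
        ≤ Real.exp (-(3 / Real.exp 1 * L)) := by
      apply Real.exp_le_exp.2
      have h4x : 4 * x i ≤ 4 * L := by linarith
      have : 3 / Real.exp 1 * L ≤ (3 * Real.exp 1 - 4) * L := by
        apply mul_le_mul_of_nonneg_right _ hL0.le
        rw [div_le_iff₀ (Real.exp_pos 1)]
        nlinarith
      nlinarith
    have step5 : Real.exp (-(3 / Real.exp 1 * L)) = δ := by
      rw [hδdef, Real.rpow_def_of_pos hε0]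
      congr 1
      rw [hL, Real.log_div one_ne_zero (ne_of_gt hε0), Real.log_one]
      ring
    calc |Real.exp (-(x i)) - ∑ k ∈ Finset.range p, (-(x i)) ^ k / (Nat.factorial k : ℝ)|
        ≤ x i ^ p / (p.factorial : ℝ) * Real.exp (x i) := step1
      _ ≤ Real.exp (3 * x i) / 3 ^ p * Real.exp (x i) := step2
      _ = Real.exp (4 * x i - (p : ℝ) * Real.log 3) := step3
      _ ≤ Real.exp (-(3 / Real.exp 1 * L)) := step4
      _ = δ := step5
  -- assemble via telescoping product
  set a : Fin d → ℝ := fun i => Real.exp (-(x i)) with ha_def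
  set b : Fin d → ℝ := fun i => ∑ k ∈ Finset.range p, (-(x i)) ^ k / (Nat.factorial k : ℝ)
    with hb_def
  have ha1 : ∀ i, |a i| ≤ 1 := by
    intro i
    rw [ha_def, abs_of_pos (Real.exp_pos _)]
    have hxi0 : 0 ≤ x i := by rw [hx i]; positivity
    exact Real.exp_le_one_iff.2 (by linarith)
  have hab : ∀ i, |a i - b i| ≤ δ := honedim
  have hbM : ∀ i, |b i| ≤ 1 + δ := by
    intro i
    calc |b i| = |a i - (a i - b i)| := by rw [sub_sub_cancel]
      _ ≤ |a i| + |a i - b i| := abs_sub _ _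
      _ ≤ 1 + δ := add_le_add (ha1 i) (hab i)
  have hprodexp : Real.exp (-∑ i, x i) = ∏ i, a i := by
    rw [ha_def]
    rw [← Real.exp_sum]
    congr 1
    simp
  have hfinal := prod_sub_prod_bound (Finset.univ : Finset (Fin d)) a b (1 + δ) δ
    (by linarith) hδ0 ha1 hbM hab
  rw [Finset.card_univ, Fintype.card_fin] at hfinal
  rw [hprodexp]
  exact hfinal
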